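/- Let p be a prime, K a field of characteristic p, and A a cyclic group of order p with generator σ. Let a′ ≥ 1, let W = K[A]^{a′}, and let U ⊆ W be a K[A]-submodule isomorphic to J_r for some 1 ≤ r ≤ p. If V is a direct summand of W containing U which is minimal among direct summands of W containing U (i.e., no direct summand of W properly contained in V contains U), then V ≅ K[A]. -/

import Mathlib

/-- The indecomposable `K[A]`-module `J_ℓ = K[A]/((σ-1)^ℓ)` for a cyclic group
`A = ⟨σ⟩` of order `p`. -/
abbrev Jmod (K : Type) [Field K] (A : Type) [CommGroup A] (σ : A) (ℓ : ℕ) :=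
  MonoidAlgebra K A ⧸ Ideal.span {(MonoidAlgebra.of K A σ - 1) ^ ℓ}


lemma Jr_aux_mem_or_unit (p : ℕ) (hp : p.Prime) (K : Type) [Field K] [CharP K p]
    (A : Type) [CommGroup A] (σ : A) (hσ : orderOf σ = p)
    (hgen : ∀ a : A, a ∈ Subgroup.zpowers σ) (b : MonoidAlgebra K A) :
    b ∈ Ideal.span {MonoidAlgebra.of K A σ - 1} ∨ IsUnit b := by
  haveI : Fact p.Prime := ⟨hp⟩
  haveI : CharP (MonoidAlgebra K A) p :=
    charP_of_injective_ringHom (algebraMap K (MonoidAlgebra K A)).injective p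
  set x : MonoidAlgebra K A := MonoidAlgebra.of K A σ - 1 with hxdef
  have hxp : x ^ p = 0 := by
    rw [hxdef, sub_pow_char, ← map_pow, ← hσ, pow_orderOf_eq_one, map_one, one_pow, sub_self]
  set ε : MonoidAlgebra K A →ₐ[K] K := (MonoidAlgebra.lift K K A) 1 with hεdef
  have key : ∀ c : MonoidAlgebra K A,
      c - algebraMap K (MonoidAlgebra K A) (ε c) ∈ Ideal.span {x} := by
    intro c
    induction c using MonoidAlgebra.induction_on with
    | of g =>
        have h1 : ε (MonoidAlgebra.of K A g) = 1 := by
          rw [hεdef, MonoidAlgebra.lift_of]; rfl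
        rw [h1, map_one]
        obtain ⟨n, hn⟩ := hgen g
        have hn' : σ ^ n = g := hn
        have hm : σ ^ (n % (p : ℤ)).toNat = g := by
          rw [← zpow_natCast, Int.toNat_of_nonneg
            (Int.emod_nonneg n (by exact_mod_cast hp.ne_zero)), ← hσ, zpow_mod_orderOf]; exact hn'
        rw [← hm, Ideal.mem_span_singleton]
        have h2 := sub_dvd_pow_sub_pow (MonoidAlgebra.of K A σ) 1 (n % (p : ℤ)).toNat
        simpa [hxdef] using h2
    | add f g hf hg =>
        have h3 : f + g - algebraMap K (MonoidAlgebra K A) (ε (f + g)) =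
            (f - algebraMap K (MonoidAlgebra K A) (ε f)) +
              (g - algebraMap K (MonoidAlgebra K A) (ε g)) := by
          rw [map_add, map_add]; ring
        rw [h3]; exact Ideal.add_mem _ hf hg
    | smul r f hf =>
        have h4 : r • f - algebraMap K (MonoidAlgebra K A) (ε (r • f)) =
            algebraMap K (MonoidAlgebra K A) r *
              (f - algebraMap K (MonoidAlgebra K A) (ε f)) := by
          rw [map_smul, Algebra.smul_def, Algebra.smul_def, map_mul, Algebra.algebraMap_self_apply]
          ring
        rw [h4]; exact Ideal.mul_mem_left _ _ hf
  by_cases h : ε b = 0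
  · left; have hb := key b; rwa [h, map_zero, sub_zero] at hb
  · right
    have hnil : IsNilpotent (b - algebraMap K (MonoidAlgebra K A) (ε b)) := by
      obtain ⟨c, hc⟩ := Ideal.mem_span_singleton.mp (key b)
      exact ⟨p, by rw [hc, mul_pow, hxp, zero_mul]⟩
    have hu : IsUnit (algebraMap K (MonoidAlgebra K A) (ε b)) :=
      (Ne.isUnit h).map (algebraMap K (MonoidAlgebra K A))
    have h5 := hnil.isUnit_add_right_of_commute hu (Commute.all _ _)
    simpa using h5

/-- Let `A = ⟨σ⟩` be cyclic of order `p` over a field `K` of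
characteristic `p`, let `W = K[A]^{a'}`, and let `U ⊆ W` be a submodule isomorphic to
`J_r` (`1 ≤ r ≤ p`).  If `V` is a direct summand of `W` containing `U` which is minimal
among direct summands of `W` containing `U`, then `V ≅ K[A]`. -/
theorem minimal_summand_containing_Jr
    (p : ℕ) (hp : p.Prime)
    (K : Type) [Field K] [CharP K p]
    (A : Type) [CommGroup A] (σ : A) (hσ : orderOf σ = p)
    (hgen : ∀ a : A, a ∈ Subgroup.zpowers σ)
    (a' : ℕ) (ha' : 1 ≤ a')
    (r : ℕ) (hr1 : 1 ≤ r) (hr2 : r ≤ p)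
    (U V : Submodule (MonoidAlgebra K A) (Fin a' → MonoidAlgebra K A))
    (hU : Nonempty (U ≃ₗ[MonoidAlgebra K A] Jmod K A σ r))
    (hUV : U ≤ V)
    (hVsummand : ∃ V', IsCompl V V')
    (hmin : ∀ V₂ : Submodule (MonoidAlgebra K A) (Fin a' → MonoidAlgebra K A),
      (∃ V₂', IsCompl V₂ V₂') → V₂ < V → ¬ U ≤ V₂) :
    Nonempty (V ≃ₗ[MonoidAlgebra K A] MonoidAlgebra K A) := by
  classical
  haveI : Fact p.Prime := ⟨hp⟩
  haveI : CharP (MonoidAlgebra K A) p :=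
    charP_of_injective_ringHom (algebraMap K (MonoidAlgebra K A)).injective p
  set x : MonoidAlgebra K A := MonoidAlgebra.of K A σ - 1 with hxdef
  have hxp : x ^ p = 0 := by
    rw [hxdef, sub_pow_char, ← map_pow, ← hσ, pow_orderOf_eq_one, map_one, one_pow, sub_self]
  obtain ⟨e⟩ := hU
  obtain ⟨V', hc⟩ := hVsummand
  -- the generator of U
  set u0 : U := e.symm (Submodule.Quotient.mk 1) with hu0
  set u : Fin a' → MonoidAlgebra K A := (u0 : Fin a' → MonoidAlgebra K A) with hu
  have hUspan : U ≤ Submodule.span (MonoidAlgebra K A) {u} := by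
    intro z hz
    obtain ⟨a, ha⟩ := Submodule.Quotient.mk_surjective _ (e ⟨z, hz⟩)
    have h1 : (⟨z, hz⟩ : U) = a • u0 := by
      rw [hu0, ← e.symm_apply_apply ⟨z, hz⟩, ← ha, ← LinearEquiv.map_smul]
      congr 1
      rw [← Submodule.Quotient.mk_smul, smul_eq_mul, mul_one]
    have h2 : z = a • u := by
      have := congrArg (Subtype.val) h1
      simpa [hu] using this
    rw [h2]
    exact Submodule.smul_mem _ _ (Submodule.mem_span_singleton_self u)
  have huU : u ∈ U := u0.2
  have hune : u ≠ 0 := by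
    intro h0
    have hu00 : u0 = 0 := by
      apply Subtype.ext; simpa [hu] using h0
    rw [hu0] at hu00
    have hmk0 : (Submodule.Quotient.mk (1 : MonoidAlgebra K A) :
        Jmod K A σ r) = 0 := (LinearEquiv.map_eq_zero_iff e.symm).mp hu00
    rw [Submodule.Quotient.mk_eq_zero] at hmk0
    have this := hmk0
    have hdvd : x ^ r ∣ 1 := by
      rwa [← Ideal.mem_span_singleton]
    have hunit : IsUnit (x ^ r) := isUnit_of_dvd_one hdvd
    have hz : (x ^ r) ^ p = 0 := by
      rw [← pow_mul, mul_comm r p, pow_mul, hxp, zero_pow (Nat.one_le_iff_ne_zero.mp hr1)]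
    exact hunit.not_isNilpotent ⟨p, hz⟩
  -- maximal k with u ∈ x^k • V
  set P : ℕ → Prop := fun k => ∃ w, w ∈ V ∧ x ^ k • w = u with hP
  have hP0 : P 0 := ⟨u, hUV huU, by simp⟩
  have hPp : ¬ P p := by
    rintro ⟨w, -, hw⟩
    rw [hxp, zero_smul] at hw
    exact hune hw.symm
  set k : ℕ := Nat.findGreatest P p with hk
  have hPk : P k := Nat.findGreatest_spec (Nat.zero_le p) hP0
  have hnotPk1 : ¬ P (k + 1) := by
    rcases lt_or_eq_of_le (Nat.findGreatest_le (P := P) p) with hlt | heq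
    · exact Nat.findGreatest_is_greatest (Nat.lt_succ_self k) hlt
    · rw [hk, heq] at hPk ⊢
      exact fun _ => hPp hPk
  obtain ⟨v, hvV, hvu⟩ := hPk
  -- v has a unit coordinate
  have hvi : ∃ i, IsUnit (v i) := by
    by_contra hno
    push_neg at hno
    have hmem : ∀ i, v i ∈ Ideal.span {x} := fun i =>
      (Jr_aux_mem_or_unit p hp K A σ hσ hgen (v i)).resolve_right (hno i)
    choose w hw using fun i => Ideal.mem_span_singleton'.mp (hmem i)
    have hvw : v = x • w := by
      funext i
      rw [Pi.smul_apply, smul_eq_mul, ← hw i, mul_comm]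
    have hwtop : w ∈ V ⊔ V' := by rw [hc.sup_eq_top]; trivial
    obtain ⟨w₁, h₁, w₂, h₂, hadd⟩ := Submodule.mem_sup.mp hwtop
    have hx2 : x • w₂ ∈ V := by
      have : x • w₂ = v - x • w₁ := by rw [hvw, ← hadd, smul_add]; ring
      rw [this]; exact Submodule.sub_mem _ hvV (Submodule.smul_mem _ _ h₁)
    have hx2' : x • w₂ ∈ V' := Submodule.smul_mem _ _ h₂
    have hx20 : x • w₂ = 0 := by
      have := hc.disjoint
      rw [Submodule.disjoint_def] at this
      exact this _ hx2 hx2'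
    have hvw1 : v = x • w₁ := by
      rw [hvw, ← hadd, smul_add, hx20, add_zero]
    exact hnotPk1 ⟨w₁, h₁, by rw [pow_succ, mul_smul, ← hvw1, hvu]⟩
  obtain ⟨i, hi⟩ := hvi
  -- the functional
  set f : (Fin a' → MonoidAlgebra K A) →ₗ[MonoidAlgebra K A] MonoidAlgebra K A :=
    ((hi.unit⁻¹ : (MonoidAlgebra K A)ˣ) : MonoidAlgebra K A) • LinearMap.proj i with hf
  have hfv : f v = 1 := by
    rw [hf]
    simp only [LinearMap.smul_apply, LinearMap.proj_apply, smul_eq_mul]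
    have h6 := hi.val_inv_mul
    exact h6
  set V₂ : Submodule (MonoidAlgebra K A) (Fin a' → MonoidAlgebra K A) :=
    Submodule.span (MonoidAlgebra K A) {v} with hV2
  have h2V : V₂ ≤ V := by
    rw [hV2, Submodule.span_le, Set.singleton_subset_iff]; exact hvV
  have hUV2 : U ≤ V₂ := by
    refine le_trans hUspan ?_
    rw [Submodule.span_le, Set.singleton_subset_iff]
    rw [← hvu]
    exact Submodule.smul_mem _ _ (Submodule.mem_span_singleton_self v)
  have hcompl2 : IsCompl V₂ (LinearMap.ker f) := by
    constructor
    · rw [Submodule.disjoint_def]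
      intro z hz hz'
      obtain ⟨a, rfl⟩ := Submodule.mem_span_singleton.mp hz
      have : f (a • v) = a := by rw [map_smul, hfv, smul_eq_mul, mul_one]
      rw [LinearMap.mem_ker] at hz'
      rw [hz'] at this
      rw [← this, zero_smul]
    · rw [codisjoint_iff, eq_top_iff]
      intro z _
      refine Submodule.mem_sup.mpr ⟨f z • v, Submodule.smul_mem _ _
        (Submodule.mem_span_singleton_self v), z - f z • v, ?_, by ring⟩
      rw [LinearMap.mem_ker, map_sub, map_smul, hfv, smul_eq_mul, mul_one, sub_self]
  have hV2V : V₂ = V := by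
    rcases lt_or_eq_of_le h2V with hlt | heq
    · exact absurd hUV2 (hmin V₂ ⟨_, hcompl2⟩ hlt)
    · exact heq
  -- build the isomorphism
  set g : MonoidAlgebra K A →ₗ[MonoidAlgebra K A] V :=
    LinearMap.toSpanSingleton (MonoidAlgebra K A) V ⟨v, hvV⟩ with hg
  have hginj : Function.Injective g := by
    intro a b hab
    have h1 : a • v = b • v := by
      have := congrArg (Subtype.val) hab
      simpa [hg, LinearMap.toSpanSingleton_apply] using this
    have := congrArg f h1
    rwa [map_smul, map_smul, hfv, smul_eq_mul, smul_eq_mul, mul_one, mul_one] at this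
  have hgsurj : Function.Surjective g := by
    intro z
    have hz : (z : Fin a' → MonoidAlgebra K A) ∈ V₂ := hV2V ▸ z.2
    obtain ⟨a, ha⟩ := Submodule.mem_span_singleton.mp hz
    exact ⟨a, by apply Subtype.ext; simpa [hg, LinearMap.toSpanSingleton_apply] using ha⟩
  exact ⟨(LinearEquiv.ofBijective g ⟨hginj, hgsurj⟩).symm⟩
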